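/- Let G be an undirected graph and Z a well-linked set in G, i.e., for all subsets Z₁, Z₂ ⊆ Z with |Z₁| = |Z₂| ≤ |Z|/2 there exist |Z₁| vertex-disjoint paths from Z₁ to Z₂. Then for any set X ⊆ V(G) with |X| < |Z|/2 and any connected component C of G − X, either |V(C) ∩ Z| ≤ |X| or |Z \ (V(C) ∪ X)| ≤ |X|. -/

import Mathlib

/-- A `Z₁`–`Z₂` linkage: a family of pairwise vertex-disjoint paths pairing up
`Z₁` with `Z₂`. -/
def Linkage {V : Type} (G : SimpleGraph V) (Z₁ Z₂ : Finset V) : Prop :=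
  ∃ (e : Z₁ → Z₂) (P : (z : Z₁) → G.Walk z.1 (e z).1),
    Function.Bijective e ∧ (∀ z, (P z).IsPath) ∧
    ∀ z z' : Z₁, z ≠ z' → ∀ x, x ∈ (P z).support → x ∉ (P z').support

/-- A walk avoiding `X` keeps the connected component in `G − X`. -/
lemma cross_aux {V : Type} (G : SimpleGraph V) (X : Finset V) :
    ∀ {u v : V} (w : G.Walk u v), (∀ x ∈ w.support, x ∉ X) →
      ∀ (hu : u ∈ ((↑X : Set V)ᶜ)) (hv : v ∈ ((↑X : Set V)ᶜ)),
      (G.induce ((↑X : Set V)ᶜ)).connectedComponentMk ⟨u, hu⟩ =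
        (G.induce ((↑X : Set V)ᶜ)).connectedComponentMk ⟨v, hv⟩ := by
  intro u v w
  induction w with
  | nil => intro _ _ _; rfl
  | @cons a b c h w ih =>
    intro hsup hu hv
    have hb : b ∈ ((↑X : Set V)ᶜ) := by
      have := hsup b (by simp [SimpleGraph.Walk.support_cons])
      simpa using this
    have h2 := ih (fun x hx => hsup x (by simp [SimpleGraph.Walk.support_cons, hx])) hb hv
    rw [← h2]
    apply SimpleGraph.ConnectedComponent.sound
    exact SimpleGraph.Adj.reachable (by simpa using h)

/-- If Z is well-linked in G, then for any X with |X| < |Z|/2 and any connected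
component C of G − X, either |V(C) ∩ Z| ≤ |X| or |Z \ (V(C) ∪ X)| ≤ |X|. -/
theorem stmt8 {V : Type} [Fintype V] [DecidableEq V] (G : SimpleGraph V)
    (Z : Finset V)
    (hwl : ∀ Z₁ Z₂ : Finset V, Z₁ ⊆ Z → Z₂ ⊆ Z → Z₁.card = Z₂.card →
      2 * Z₁.card ≤ Z.card → Linkage G Z₁ Z₂)
    (X : Finset V) (hX : 2 * X.card < Z.card)
    (C : (G.induce ((↑X : Set V)ᶜ)).ConnectedComponent) :
    ((↑Z : Set V) ∩ {v : V | ∃ hv : v ∈ ((↑X : Set V)ᶜ),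
        (G.induce ((↑X : Set V)ᶜ)).connectedComponentMk ⟨v, hv⟩ = C}).ncard ≤ X.card ∨
    ((↑Z : Set V) \ ({v : V | ∃ hv : v ∈ ((↑X : Set V)ᶜ),
        (G.induce ((↑X : Set V)ᶜ)).connectedComponentMk ⟨v, hv⟩ = C} ∪ ↑X)).ncard ≤ X.card := by
  classical
  set S : Set V := {v : V | ∃ hv : v ∈ ((↑X : Set V)ᶜ),
      (G.induce ((↑X : Set V)ᶜ)).connectedComponentMk ⟨v, hv⟩ = C} with hSdef
  by_contra hcon
  push_neg at hcon
  obtain ⟨h1, h2⟩ := hcon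
  have hA : ((↑Z : Set V) ∩ S).Finite := Set.toFinite _
  have hB : ((↑Z : Set V) \ (S ∪ ↑X)).Finite := Set.toFinite _
  have hdisj : Disjoint ((↑Z : Set V) ∩ S) ((↑Z : Set V) \ (S ∪ ↑X)) := by
    rw [Set.disjoint_left]
    rintro a ⟨-, haS⟩ ⟨-, haB⟩
    exact haB (Or.inl haS)
  have hsub : ((↑Z : Set V) ∩ S) ∪ ((↑Z : Set V) \ (S ∪ ↑X)) ⊆ (↑Z : Set V) := by
    rintro a (⟨h, -⟩ | ⟨h, -⟩) <;> exact h
  have hcard : ((↑Z : Set V) ∩ S).ncard + ((↑Z : Set V) \ (S ∪ ↑X)).ncard ≤ Z.card := by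
    rw [← Set.ncard_union_eq hdisj hA hB]
    calc ((↑Z : Set V) ∩ S ∪ (↑Z : Set V) \ (S ∪ ↑X)).ncard
        ≤ (↑Z : Set V).ncard := Set.ncard_le_ncard hsub (Set.toFinite _)
      _ = Z.card := Set.ncard_coe_finset Z
  -- pick Z₁ ⊆ Z∩S and Z₂ ⊆ Z\(S∪X) of size |X|+1
  obtain ⟨Z₁, hZ₁sub, hZ₁card⟩ := Finset.exists_subset_card_eq (s := hA.toFinset) (n := X.card + 1)
    (by rw [← Set.ncard_eq_toFinset_card _ hA]; omega)
  obtain ⟨Z₂, hZ₂sub, hZ₂card⟩ := Finset.exists_subset_card_eq (s := hB.toFinset) (n := X.card + 1)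
    (by rw [← Set.ncard_eq_toFinset_card _ hB]; omega)
  have hZ₁A : ∀ x ∈ Z₁, x ∈ (↑Z : Set V) ∩ S := fun x hx => hA.mem_toFinset.mp (hZ₁sub hx)
  have hZ₂B : ∀ x ∈ Z₂, x ∈ (↑Z : Set V) \ (S ∪ ↑X) := fun x hx => hB.mem_toFinset.mp (hZ₂sub hx)
  obtain ⟨e, P, hbij, hpath, hdisjP⟩ := hwl Z₁ Z₂
    (fun x hx => (hZ₁A x hx).1) (fun x hx => (hZ₂B x hx).1)
    (by omega) (by omega)
  -- each path must hit X
  have hx : ∀ z : Z₁, ∃ x, x ∈ (P z).support ∧ x ∈ X := by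
    intro z
    by_contra hno
    push_neg at hno
    obtain ⟨hu, huC⟩ := (hZ₁A z.1 z.2).2
    have hvB := hZ₂B (e z).1 (e z).2
    have hvX : (e z).1 ∉ (↑X : Set V) := fun hh => hvB.2 (Or.inr hh)
    have heq := cross_aux G X (P z) (fun x hx' hxX => hno x hx' hxX) hu hvX
    exact hvB.2 (Or.inl ⟨hvX, by rw [← heq, huC]⟩)
  choose g hg1 hg2 using hx
  have hginj : Function.Injective g := by
    intro z z' hgz
    by_contra hne
    exact hdisjP z z' hne (g z) (hg1 z) (hgz ▸ hg1 z')
  have := Fintype.card_le_of_injective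
    (fun z : (↑Z₁ : Finset V) => (⟨g z, hg2 z⟩ : (↑X : Finset V)))
    (fun a b hab => hginj (congrArg Subtype.val hab))
  simp only [Fintype.card_coe] at this
  omega
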